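/- Fix an integer ℓ > 2. Suppose a partition λ is not an (ℓ,0)-JM partition, and let μ be a partition obtained from λ by adding a horizontal ℓ-rim hook or a vertical ℓ-rim hook (that is, λ is obtained from μ by removing a horizontal or vertical removable ℓ-rim hook of μ). Then μ is not an (ℓ,0)-JM partition. -/
import Mathlib


noncomputable section

/-!
Common combinatorial definitions: partitions (English notation, rows indexed from 1),
Young diagrams, hooks, rim hooks, ladders, residues, crystal operators (classical and
ladder versions), locked boxes, regularization classes, dominance order.
-/

structure YPartition where
  part : ℕ → ℕ
  zero_at_zero : part 0 = 0
  antitone : ∀ i j : ℕ, 1 ≤ i → i ≤ j → part j ≤ part i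
  eventually_zero : ∃ N : ℕ, ∀ i : ℕ, N ≤ i → part i = 0

namespace YPartition

/-- The set of boxes of the Young diagram of `μ` (row, column), both indices ≥ 1. -/
def cells (μ : YPartition) : Set (ℕ × ℕ) :=
  {p | 1 ≤ p.1 ∧ 1 ≤ p.2 ∧ p.2 ≤ μ.part p.1}

/-- The length of column `b`: the number of rows containing a box in column `b`. -/
def colLen (μ : YPartition) (b : ℕ) : ℕ :=
  Nat.card {a : ℕ | 1 ≤ a ∧ b ≤ μ.part a}

/-- The arm of box `(a,b)`: boxes strictly to its right in its row. -/
def arm (μ : YPartition) (a b : ℕ) : ℕ := μ.part a - b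

/-- The leg of box `(a,b)`: boxes strictly below it in its column. -/
def leg (μ : YPartition) (a b : ℕ) : ℕ := μ.colLen b - a

/-- The hook length of the box `(a,b)`: arm + leg + 1. -/
def hook (μ : YPartition) (a b : ℕ) : ℕ := (μ.part a - b) + (μ.colLen b - a) + 1

/-- The number of boxes of `μ`. -/
def size (μ : YPartition) : ℕ := μ.cells.ncard

/-- The number of (nonzero) parts of `μ`. -/
def length (μ : YPartition) : ℕ := μ.colLen 1

/-- `μ` is an `(ℓ,0)`-JM partition: there are no boxes `(a,b)`, `(a,y)`, `(x,b)` with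
`ℓ ∣ hook (a,b)` while `ℓ` divides neither `hook (a,y)` nor `hook (x,b)`. -/
def IsJM (ℓ : ℕ) (μ : YPartition) : Prop :=
  ¬ ∃ a b y x : ℕ, (a, b) ∈ μ.cells ∧ (a, y) ∈ μ.cells ∧ (x, b) ∈ μ.cells ∧
    ℓ ∣ μ.hook a b ∧ ¬ ℓ ∣ μ.hook a y ∧ ¬ ℓ ∣ μ.hook x b

/-- Two boxes share an edge. -/
def BoxAdjacent (p q : ℕ × ℕ) : Prop :=
  (p.1 = q.1 ∧ (p.2 + 1 = q.2 ∨ q.2 + 1 = p.2)) ∨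
  (p.2 = q.2 ∧ (p.1 + 1 = q.1 ∨ q.1 + 1 = p.1))

/-- A set of boxes is connected (via shared edges, inside the set). -/
def SetConnected (S : Set (ℕ × ℕ)) : Prop :=
  ∀ p ∈ S, ∀ q ∈ S,
    Relation.ReflTransGen (fun x y => x ∈ S ∧ y ∈ S ∧ BoxAdjacent x y) p q

/-- `S` contains no 2 × 2 square of boxes. -/
def HasNoSquare (S : Set (ℕ × ℕ)) : Prop :=
  ¬ ∃ a b : ℕ, (a, b) ∈ S ∧ (a + 1, b) ∈ S ∧ (a, b + 1) ∈ S ∧ (a + 1, b + 1) ∈ S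

/-- `S` is a removable `ℓ`-rim hook of `μ`: a connected set of `ℓ` boxes of `μ` with no
2 × 2 square whose removal leaves the Young diagram of a partition. -/
def IsRimHook (ℓ : ℕ) (μ : YPartition) (S : Set (ℕ × ℕ)) : Prop :=
  S ⊆ μ.cells ∧ S.ncard = ℓ ∧ SetConnected S ∧ HasNoSquare S ∧
    ∃ ν : YPartition, ν.cells = μ.cells \ S

/-- `S` is contained in a single row. -/
def HorizontalHook (S : Set (ℕ × ℕ)) : Prop := ∃ a : ℕ, ∀ p ∈ S, p.1 = a

/-- `S` is contained in a single column. -/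
def VerticalHook (S : Set (ℕ × ℕ)) : Prop := ∃ b : ℕ, ∀ p ∈ S, p.2 = b

/-- Two sets of boxes are adjacent when some box of one shares an edge with a box of the other. -/
def SetsAdjacent (R S : Set (ℕ × ℕ)) : Prop := ∃ p ∈ R, ∃ q ∈ S, BoxAdjacent p q

/-- An `ℓ`-core: a partition with no removable `ℓ`-rim hook. -/
def IsCore (ℓ : ℕ) (μ : YPartition) : Prop := ¬ ∃ S : Set (ℕ × ℕ), IsRimHook ℓ μ S

/-- `p` and `q` lie on the same ladder: going down one column step the row increases
by `ℓ - 1`. -/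
def SameLadder (ℓ : ℕ) (p q : ℕ × ℕ) : Prop :=
  (q.1 : ℤ) - (p.1 : ℤ) = ((ℓ : ℤ) - 1) * ((p.2 : ℤ) - (q.2 : ℤ))

/-- The index of the ladder through `p`: the ladder through `(k,1)` has index `k`. -/
def ladderIdx (ℓ : ℕ) (p : ℕ × ℕ) : ℕ := p.1 + (ℓ - 1) * (p.2 - 1)

/-- The residue of position `(a,b)` is `b - a` mod `ℓ`. -/
def res (ℓ : ℕ) (p : ℕ × ℕ) : ℕ := (((p.2 : ℤ) - (p.1 : ℤ)) % (ℓ : ℤ)).toNat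

/-- `p` is a removable box of `μ`. -/
def Removable (μ : YPartition) (p : ℕ × ℕ) : Prop :=
  1 ≤ p.1 ∧ p.2 = μ.part p.1 ∧ μ.part (p.1 + 1) < p.2

/-- `p` is an addable box of `μ`. -/
def Addable (μ : YPartition) (p : ℕ × ℕ) : Prop :=
  1 ≤ p.1 ∧ p.2 = μ.part p.1 + 1 ∧ (p.1 = 1 ∨ p.2 ≤ μ.part (p.1 - 1))

/-- The removable `i`-boxes of `μ`. -/
def RemovableRes (ℓ i : ℕ) (μ : YPartition) : Set (ℕ × ℕ) :=
  {p | Removable μ p ∧ res ℓ p = i}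

/-- The addable `i`-boxes of `μ`. -/
def AddableRes (ℓ i : ℕ) (μ : YPartition) : Set (ℕ × ℕ) :=
  {p | Addable μ p ∧ res ℓ p = i}

/-- Ladder reading order (reflexive): ladders left to right, top to bottom within a ladder.
`LadderLE ℓ p q` means `p` is read before (or equal to) `q`. -/
def LadderLE (ℓ : ℕ) (p q : ℕ × ℕ) : Prop :=
  ladderIdx ℓ p < ladderIdx ℓ q ∨ (ladderIdx ℓ p = ladderIdx ℓ q ∧ p.1 ≤ q.1)

/-- Strict ladder reading order. -/
def LadderLT (ℓ : ℕ) (p q : ℕ × ℕ) : Prop :=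
  ladderIdx ℓ p < ladderIdx ℓ q ∨ (ladderIdx ℓ p = ladderIdx ℓ q ∧ p.1 < q.1)

/-- Classical reading order (reflexive): rows from bottom to top.
`RowLE p q` means `p` is read before (or equal to) `q`. -/
def RowLE (p q : ℕ × ℕ) : Prop := q.1 ≤ p.1

/-- Given a reading order `le`, a set `Rem` of `-` marks and `Add` of `+` marks, a `-` at `p`
survives the cancellation of adjacent `-+` pairs iff every interval of the reading word
starting at `p` contains strictly more `-`'s than `+`'s. -/
def NormalIn (le : ℕ × ℕ → ℕ × ℕ → Prop) (Rem Add : Set (ℕ × ℕ)) (p : ℕ × ℕ) : Prop :=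
  p ∈ Rem ∧ ∀ q ∈ Rem ∪ Add, le p q →
    (Add ∩ {s | le p s ∧ le s q}).ncard < (Rem ∩ {s | le p s ∧ le s q}).ncard

/-- A `+` at `q` survives the cancellation of adjacent `-+` pairs iff every interval of the
reading word ending at `q` contains strictly more `+`'s than `-`'s. -/
def ConormalIn (le : ℕ × ℕ → ℕ × ℕ → Prop) (Rem Add : Set (ℕ × ℕ)) (q : ℕ × ℕ) : Prop :=
  q ∈ Add ∧ ∀ p ∈ Rem ∪ Add, le p q →
    (Rem ∩ {s | le p s ∧ le s q}).ncard < (Add ∩ {s | le p s ∧ le s q}).ncard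

/-- Ladder normal `i`-box. -/
def LadderNormal (ℓ i : ℕ) (μ : YPartition) (p : ℕ × ℕ) : Prop :=
  NormalIn (LadderLE ℓ) (RemovableRes ℓ i μ) (AddableRes ℓ i μ) p

/-- Ladder conormal `i`-box. -/
def LadderConormal (ℓ i : ℕ) (μ : YPartition) (p : ℕ × ℕ) : Prop :=
  ConormalIn (LadderLE ℓ) (RemovableRes ℓ i μ) (AddableRes ℓ i μ) p

/-- Normal `i`-box (classical signature). -/
def ClassNormal (ℓ i : ℕ) (μ : YPartition) (p : ℕ × ℕ) : Prop :=
  NormalIn RowLE (RemovableRes ℓ i μ) (AddableRes ℓ i μ) p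

/-- Conormal `i`-box (classical signature). -/
def ClassConormal (ℓ i : ℕ) (μ : YPartition) (p : ℕ × ℕ) : Prop :=
  ConormalIn RowLE (RemovableRes ℓ i μ) (AddableRes ℓ i μ) p

/-- `ε̂_i(μ)`: number of ladder normal `i`-boxes. -/
def hatEps (ℓ i : ℕ) (μ : YPartition) : ℕ := {p | LadderNormal ℓ i μ p}.ncard

/-- `φ̂_i(μ)`: number of ladder conormal `i`-boxes. -/
def hatPhi (ℓ i : ℕ) (μ : YPartition) : ℕ := {p | LadderConormal ℓ i μ p}.ncard

/-- `ε_i(μ)`: number of normal `i`-boxes. -/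
def eps (ℓ i : ℕ) (μ : YPartition) : ℕ := {p | ClassNormal ℓ i μ p}.ncard

/-- `φ_i(μ)`: number of conormal `i`-boxes. -/
def phi (ℓ i : ℕ) (μ : YPartition) : ℕ := {p | ClassConormal ℓ i μ p}.ncard

/-- The ladder good `i`-box: the leftmost `-` of the reduced ladder `i`-signature. -/
def LadderGood (ℓ i : ℕ) (μ : YPartition) (p : ℕ × ℕ) : Prop :=
  LadderNormal ℓ i μ p ∧ ∀ q, LadderNormal ℓ i μ q → LadderLE ℓ p q

/-- The ladder cogood `i`-box: the rightmost `+` of the reduced ladder `i`-signature. -/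
def LadderCogood (ℓ i : ℕ) (μ : YPartition) (p : ℕ × ℕ) : Prop :=
  LadderConormal ℓ i μ p ∧ ∀ q, LadderConormal ℓ i μ q → LadderLE ℓ q p

/-- The good `i`-box (classical). -/
def ClassGood (ℓ i : ℕ) (μ : YPartition) (p : ℕ × ℕ) : Prop :=
  ClassNormal ℓ i μ p ∧ ∀ q, ClassNormal ℓ i μ q → RowLE p q

/-- The cogood `i`-box (classical). -/
def ClassCogood (ℓ i : ℕ) (μ : YPartition) (p : ℕ × ℕ) : Prop :=
  ClassConormal ℓ i μ p ∧ ∀ q, ClassConormal ℓ i μ q → RowLE q p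

/-- The ladder crystal operator `f̂_i` as a relation: `mu = f̂_i lam ≠ 0`. -/
def HatF (ℓ i : ℕ) (lam mu : YPartition) : Prop :=
  ∃ p, LadderCogood ℓ i lam p ∧ mu.cells = insert p lam.cells

/-- The ladder crystal operator `ê_i` as a relation: `mu = ê_i lam ≠ 0`. -/
def HatE (ℓ i : ℕ) (lam mu : YPartition) : Prop :=
  ∃ p, LadderGood ℓ i lam p ∧ mu.cells = lam.cells \ {p}

/-- The classical crystal operator `f̃_i` as a relation: `mu = f̃_i lam ≠ 0`. -/
def TildeF (ℓ i : ℕ) (lam mu : YPartition) : Prop :=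
  ∃ p, ClassCogood ℓ i lam p ∧ mu.cells = insert p lam.cells

/-- The classical crystal operator `ẽ_i` as a relation: `mu = ẽ_i lam ≠ 0`. -/
def TildeE (ℓ i : ℕ) (lam mu : YPartition) : Prop :=
  ∃ p, ClassGood ℓ i lam p ∧ mu.cells = lam.cells \ {p}

/-- `n`-fold composition of a relation. -/
def RelIter {α : Type} (r : α → α → Prop) : ℕ → α → α → Prop
  | 0 => fun a b => a = b
  | n + 1 => fun a b => ∃ c, r a c ∧ RelIter r n c b

/-- The empty partition. -/
def emptyP : YPartition where
  part := fun _ => 0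
  zero_at_zero := rfl
  antitone := fun _ _ _ _ => le_rfl
  eventually_zero := ⟨0, fun _ _ => rfl⟩

/-- `μ` is a node of the ladder crystal `B(Λ₀)^L`: it is obtained from the empty
partition by finitely many applications of the operators `f̂_i`, `0 ≤ i < ℓ`. -/
def LadderNode (ℓ : ℕ) (μ : YPartition) : Prop :=
  Relation.ReflTransGen (fun a b => ∃ i : ℕ, i < ℓ ∧ HatF ℓ i a b) emptyP μ

/-- The type I locking condition at `(a,b)`: every unoccupied position on the ladder of
`(a,b)` lying below it has an unoccupied position directly above it. -/
def LadderClear (ℓ : ℕ) (μ : YPartition) (a b : ℕ) : Prop :=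
  ∀ c d : ℕ, 1 ≤ c → 1 ≤ d → SameLadder ℓ (a, b) (c, d) → a < c →
    (c, d) ∉ μ.cells → (c - 1, d) ∉ μ.cells

/-- Locked boxes of `μ`. -/
inductive Locked (ℓ : ℕ) (μ : YPartition) : ℕ × ℕ → Prop where
  | typeI_top : ∀ b : ℕ, (1, b) ∈ μ.cells → LadderClear ℓ μ 1 b → Locked ℓ μ (1, b)
  | typeI_up : ∀ a b : ℕ, (a + 1, b) ∈ μ.cells → Locked ℓ μ (a, b) →
      LadderClear ℓ μ (a + 1) b → Locked ℓ μ (a + 1, b)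
  | typeII : ∀ a b b' : ℕ, (a, b) ∈ μ.cells → b < b' → Locked ℓ μ (a, b') → Locked ℓ μ (a, b)

/-- Number of boxes of `μ` on the `k`-th ladder. -/
def ladderCount (ℓ : ℕ) (μ : YPartition) (k : ℕ) : ℕ :=
  (μ.cells ∩ {p | ladderIdx ℓ p = k}).ncard

/-- `lam` and `mu` lie in the same regularization class: they have the same number of
boxes on every ladder. -/
def SameRegClass (ℓ : ℕ) (lam mu : YPartition) : Prop :=
  ∀ k : ℕ, ladderCount ℓ lam k = ladderCount ℓ mu k

/-- The boxes of `μ` are top-justified on each ladder. -/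
def TopJustified (ℓ : ℕ) (μ : YPartition) : Prop :=
  ∀ p ∈ μ.cells, ∀ q : ℕ × ℕ, 1 ≤ q.1 → 1 ≤ q.2 →
    ladderIdx ℓ q = ladderIdx ℓ p → q.1 < p.1 → q ∈ μ.cells

/-- `mu = R lam`: the regularization of `lam`, obtained by moving every box of `lam` to
the topmost unoccupied positions of its ladder. -/
def IsRegularization (ℓ : ℕ) (lam mu : YPartition) : Prop :=
  SameRegClass ℓ lam mu ∧ TopJustified ℓ mu

/-- Dominance order on partitions. -/
def DomLE (lam mu : YPartition) : Prop :=
  ∀ j : ℕ, ∑ i ∈ Finset.Icc 1 j, lam.part i ≤ ∑ i ∈ Finset.Icc 1 j, mu.part i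

/-- All (positive) positions on the `k`-th ladder. -/
def LadderPositions (ℓ k : ℕ) : Set (ℕ × ℕ) :=
  {p | 1 ≤ p.1 ∧ 1 ≤ p.2 ∧ ladderIdx ℓ p = k}

/-- The set of locked boxes of `μ`. -/
def lockedCells (ℓ : ℕ) (μ : YPartition) : Set (ℕ × ℕ) := {p | Locked ℓ μ p}

/-- The number of unlocked boxes of `μ` on the `k`-th ladder. -/
def unlockedCount (ℓ : ℕ) (μ : YPartition) (k : ℕ) : ℕ :=
  ((μ.cells ∩ LadderPositions ℓ k) \ lockedCells ℓ μ).ncard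

/-- The diagram `S μ`: locked boxes stay put, and on each ladder the unlocked boxes are
moved into the lowest positions of that ladder not occupied by locked boxes. -/
def SCells (ℓ : ℕ) (μ : YPartition) : Set (ℕ × ℕ) :=
  lockedCells ℓ μ ∪
    {p | 1 ≤ p.1 ∧ 1 ≤ p.2 ∧ p ∉ lockedCells ℓ μ ∧
      ((LadderPositions ℓ (ladderIdx ℓ p) ∩ {q | p.1 < q.1}) \ lockedCells ℓ μ).ncard
        < unlockedCount ℓ μ (ladderIdx ℓ p)}

/-- `μ` is `ℓ`-regular: no part occurs `ℓ` or more times. -/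
def IsRegular (ℓ : ℕ) (μ : YPartition) : Prop :=
  ∀ a : ℕ, 1 ≤ a → 0 < μ.part (a + (ℓ - 1)) → μ.part (a + (ℓ - 1)) < μ.part a

/-- Removal of a single horizontal or vertical `ℓ`-rim hook. -/
def RemoveHV (ℓ : ℕ) (lam mu : YPartition) : Prop :=
  ∃ S : Set (ℕ × ℕ), IsRimHook ℓ lam S ∧ (HorizontalHook S ∨ VerticalHook S) ∧
    mu.cells = lam.cells \ S

/-- Condition (1): every removable `ℓ`-rim hook is horizontal or vertical. -/
def Cond1 (ℓ : ℕ) (μ : YPartition) : Prop :=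
  ∀ S : Set (ℕ × ℕ), IsRimHook ℓ μ S → HorizontalHook S ∨ VerticalHook S

/-- Condition (2): no vertical (resp. horizontal) `ℓ`-rim hook `R` of `μ` together with an
adjacent horizontal (resp. vertical) `ℓ`-rim hook `S` of `μ \ R` . -/
def Cond2 (ℓ : ℕ) (μ : YPartition) : Prop :=
  ¬ ∃ (R S : Set (ℕ × ℕ)) (ν : YPartition), IsRimHook ℓ μ R ∧ ν.cells = μ.cells \ R ∧
    IsRimHook ℓ ν S ∧ SetsAdjacent R S ∧
    ((VerticalHook R ∧ HorizontalHook S) ∨ (HorizontalHook R ∧ VerticalHook S))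

/-- A generalized `ℓ`-partition: conditions (1) and (2) hold after removing any sequence of
horizontal and vertical `ℓ`-rim hooks (including the empty sequence). -/
def IsGenLPartition (ℓ : ℕ) (lam : YPartition) : Prop :=
  ∀ mu : YPartition, Relation.ReflTransGen (RemoveHV ℓ) lam mu → Cond1 ℓ mu ∧ Cond2 ℓ mu

/-- The `t`-th row (from the top) of the bottom block of the decomposition
`(μ, r, s, ρ, σ)`: the number of values `v ∈ [1, s+1]` whose column block still reaches
row `t`; column block `v` consists of `σ_v·ℓ + (s+1−v)(ℓ−1)` rows of length `≥ v`. -/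
def bottomPart (ℓ s : ℕ) (σ : YPartition) (t : ℕ) : ℕ :=
  ((Finset.Icc 1 (s + 1)).filter fun v => t ≤ σ.part v * ℓ + (s + 1 - v) * (ℓ - 1)).card

/-- The `i`-th part of the partition corresponding to the data `(μ, r, s, ρ, σ)`. -/
def decompPart (ℓ : ℕ) (mu : YPartition) (r s : ℕ) (ρ σ : YPartition) (i : ℕ) : ℕ :=
  if i = 0 then 0
  else if i ≤ r + 1 then s + mu.part 1 + (r + 1 - i) * (ℓ - 1) + ρ.part i * ℓ
  else if i ≤ r + max mu.length 1 then s + mu.part (i - r)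
  else bottomPart ℓ s σ (i - (r + max mu.length 1))

/-- Admissibility of the decomposition data `(μ, r, s, ρ, σ)`. -/
def GoodData (ℓ : ℕ) (mu : YPartition) (r s : ℕ) (ρ σ : YPartition) : Prop :=
  IsCore ℓ mu ∧ mu.part 1 < mu.part 2 + (ℓ - 1) ∧ mu.colLen 1 < mu.colLen 2 + (ℓ - 1) ∧
  ρ.length ≤ r + 1 ∧ σ.length ≤ s + 1 ∧
  (mu.cells = ∅ → ρ.part (r + 1) = 0 ∨ σ.part (s + 1) = 0)

/-- `lam ≈ (μ, r, s, ρ, σ)`. -/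
def Decomposes (ℓ : ℕ) (lam mu : YPartition) (r s : ℕ) (ρ σ : YPartition) : Prop :=
  ∀ i : ℕ, lam.part i = decompPart ℓ mu r s ρ σ i

/-- Removal of a single `ℓ`-rim hook. -/
def RemoveHook (ℓ : ℕ) (lam mu : YPartition) : Prop :=
  ∃ S : Set (ℕ × ℕ), IsRimHook ℓ lam S ∧ mu.cells = lam.cells \ S

/-- `lam` has `ℓ`-core `nu` and `ℓ`-weight `w`. -/
def HasCoreAndWeight (ℓ : ℕ) (lam nu : YPartition) (w : ℕ) : Prop :=
  IsCore ℓ nu ∧ RelIter (RemoveHook ℓ) w lam nu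

/-- An L-partition. -/
def IsLPartition (ℓ : ℕ) (lam : YPartition) : Prop :=
  ¬ ∃ p : ℕ × ℕ, p ∈ lam.cells ∧ ℓ ∣ lam.hook p.1 p.2 ∧
    (lam.arm p.1 p.2 < (ℓ - 1) * lam.leg p.1 p.2 ∨
     lam.leg p.1 p.2 < (ℓ - 1) * lam.arm p.1 p.2)

end YPartition

open YPartition

/-! ### Auxiliary lemmas for statement0 -/

section Aux

lemma aux_mem_cells {μ : YPartition} {a b : ℕ} :
    (a, b) ∈ μ.cells ↔ 1 ≤ a ∧ 1 ≤ b ∧ b ≤ μ.part a := Iff.rfl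

lemma aux_colFinite (μ : YPartition) (b : ℕ) (hb : 1 ≤ b) :
    {x : ℕ | 1 ≤ x ∧ b ≤ μ.part x}.Finite := by
  obtain ⟨N, hN⟩ := μ.eventually_zero
  apply Set.Finite.subset (Set.finite_Icc 1 N)
  rintro x ⟨hx1, hxb⟩
  refine ⟨hx1, ?_⟩
  by_contra h
  have := hN x (by omega)
  omega

lemma aux_colLen_eq_ncard (μ : YPartition) (b : ℕ) :
    μ.colLen b = {x : ℕ | 1 ≤ x ∧ b ≤ μ.part x}.ncard :=
  Nat.card_coe_set_eq _

lemma aux_ncard_Icc (a b : ℕ) : (Set.Icc a b).ncard = b + 1 - a := by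
  rw [← Finset.coe_Icc, Set.ncard_coe_finset, Nat.card_Icc]

lemma aux_ncard_Ioc (a b : ℕ) : (Set.Ioc a b).ncard = b - a := by
  rw [← Finset.coe_Ioc, Set.ncard_coe_finset, Nat.card_Ioc]

lemma aux_colLen_eq_of (μ : YPartition) (b k : ℕ)
    (h1 : ∀ x, 1 ≤ x → x ≤ k → b ≤ μ.part x)
    (h2 : ∀ x, k < x → μ.part x < b) :
    μ.colLen b = k := by
  have hset : {x : ℕ | 1 ≤ x ∧ b ≤ μ.part x} = Set.Icc 1 k := by
    ext x
    simp only [Set.mem_setOf_eq, Set.mem_Icc]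
    constructor
    · rintro ⟨hx1, hxb⟩
      refine ⟨hx1, ?_⟩
      by_contra h
      have := h2 x (by omega)
      omega
    · rintro ⟨hx1, hxk⟩
      exact ⟨hx1, h1 x hx1 hxk⟩
  rw [aux_colLen_eq_ncard, hset, aux_ncard_Icc]
  omega

lemma aux_le_colLen_iff (μ : YPartition) {a b : ℕ} (ha : 1 ≤ a) (hb : 1 ≤ b) :
    a ≤ μ.colLen b ↔ b ≤ μ.part a := by
  have hfin := aux_colFinite μ b hb
  rw [aux_colLen_eq_ncard]
  constructor
  · intro h
    by_contra hab
    push_neg at hab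
    have hsub : {x : ℕ | 1 ≤ x ∧ b ≤ μ.part x} ⊆ Set.Icc 1 (a - 1) := by
      rintro x ⟨hx1, hxb⟩
      refine ⟨hx1, ?_⟩
      by_contra hxa
      have hax : a ≤ x := by omega
      have := μ.antitone a x ha hax
      omega
    have := Set.ncard_le_ncard hsub (Set.finite_Icc _ _)
    rw [aux_ncard_Icc] at this
    omega
  · intro h
    have hsub : Set.Icc 1 a ⊆ {x : ℕ | 1 ≤ x ∧ b ≤ μ.part x} := by
      rintro x ⟨hx1, hxa⟩
      exact ⟨hx1, le_trans h (μ.antitone x a hx1 hxa)⟩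
    have := Set.ncard_le_ncard hsub hfin
    rw [aux_ncard_Icc] at this
    omega

lemma aux_colLen_zero (μ : YPartition) : μ.colLen 0 = 0 := by
  have hset : {x : ℕ | 1 ≤ x ∧ 0 ≤ μ.part x} = Set.Ici 1 := by
    ext x; simp
  rw [aux_colLen_eq_ncard, hset]
  exact Set.Infinite.ncard (Set.Ici_infinite 1)

lemma aux_part_le_of_subset {lam mu : YPartition} (h : lam.cells ⊆ mu.cells) (i : ℕ) :
    lam.part i ≤ mu.part i := by
  rcases Nat.eq_zero_or_pos i with rfl | hi
  · rw [lam.zero_at_zero, mu.zero_at_zero]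
  rcases Nat.eq_zero_or_pos (lam.part i) with h0 | hp
  · omega
  have hm : (i, lam.part i) ∈ lam.cells := ⟨hi, hp, le_refl _⟩
  exact (h hm).2.2

/-- The conjugate (transpose) partition. -/
def aux_conj (μ : YPartition) : YPartition where
  part := μ.colLen
  zero_at_zero := aux_colLen_zero μ
  antitone := by
    intro i j hi hij
    rw [aux_colLen_eq_ncard, aux_colLen_eq_ncard]
    apply Set.ncard_le_ncard
    · rintro x ⟨hx1, hxj⟩
      exact ⟨hx1, le_trans hij hxj⟩
    · exact aux_colFinite μ i hi
  eventually_zero := by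
    refine ⟨μ.part 1 + 1, fun b hb => ?_⟩
    apply aux_colLen_eq_of μ b 0
    · intro x hx1 hxk; omega
    · intro x hx
      have := μ.antitone 1 x le_rfl (by omega)
      omega

lemma aux_conj_part (μ : YPartition) (b : ℕ) : (aux_conj μ).part b = μ.colLen b := rfl

lemma aux_conj_colLen (μ : YPartition) (b : ℕ) (hb : 1 ≤ b) :
    (aux_conj μ).colLen b = μ.part b := by
  apply aux_colLen_eq_of
  · intro x hx1 hxk
    show b ≤ μ.colLen x
    exact (aux_le_colLen_iff μ hb hx1).mpr hxk
  · intro x hx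
    have hx1 : 1 ≤ x := by omega
    show μ.colLen x < b
    by_contra h
    push_neg at h
    have := (aux_le_colLen_iff μ hb hx1).mp h
    omega

lemma aux_conj_hook (μ : YPartition) (a b : ℕ) (hb : 1 ≤ b) :
    (aux_conj μ).hook a b = μ.hook b a := by
  show ((aux_conj μ).part a - b) + ((aux_conj μ).colLen b - a) + 1
      = (μ.part b - a) + (μ.colLen a - b) + 1
  rw [aux_conj_colLen μ b hb, aux_conj_part]
  omega

lemma aux_conj_cells (μ : YPartition) (a b : ℕ) :
    (a, b) ∈ (aux_conj μ).cells ↔ (b, a) ∈ μ.cells := by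
  rw [aux_mem_cells, aux_mem_cells, aux_conj_part]
  constructor
  · rintro ⟨ha, hb, h⟩
    exact ⟨hb, ha, (aux_le_colLen_iff μ hb ha).mp h⟩
  · rintro ⟨hb, ha, h⟩
    exact ⟨ha, hb, (aux_le_colLen_iff μ hb ha).mpr h⟩

lemma aux_notJM_conj {ℓ : ℕ} {μ : YPartition} (h : ¬ IsJM ℓ μ) : ¬ IsJM ℓ (aux_conj μ) := by
  simp only [IsJM, not_not] at h ⊢
  obtain ⟨a, b, y, x, hab, hay, hxb, hd, hny, hnx⟩ := h
  refine ⟨b, a, x, y, (aux_conj_cells μ b a).mpr hab, (aux_conj_cells μ b x).mpr hxb,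
    (aux_conj_cells μ y a).mpr hay, ?_, ?_, ?_⟩
  · rw [aux_conj_hook μ b a hab.1]; exact hd
  · rw [aux_conj_hook μ b x hxb.1]; exact hnx
  · rw [aux_conj_hook μ y a hab.1]; exact hny

lemma aux_notJM_of_conj {ℓ : ℕ} {μ : YPartition} (h : ¬ IsJM ℓ (aux_conj μ)) : ¬ IsJM ℓ μ := by
  simp only [IsJM, not_not] at h ⊢
  obtain ⟨a, b, y, x, hab, hay, hxb, hd, hny, hnx⟩ := h
  have hab' := (aux_conj_cells μ a b).mp hab
  have hay' := (aux_conj_cells μ a y).mp hay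
  have hxb' := (aux_conj_cells μ x b).mp hxb
  refine ⟨b, a, x, y, hab', hxb', hay', ?_, ?_, ?_⟩
  · rw [← aux_conj_hook μ a b hab.2.1]; exact hd
  · rw [← aux_conj_hook μ x b hxb.2.1]; exact hnx
  · rw [← aux_conj_hook μ a y hay.2.1]; exact hny

/-- The main lemma: adding `ℓ` boxes to a single row `r` preserves non-JM-ness. -/
lemma aux_horiz (ℓ : ℕ) (hℓ : 2 < ℓ) (lam mu : YPartition) (r : ℕ) (hr : 1 ≤ r)
    (hpart : ∀ i, i ≠ r → lam.part i = mu.part i)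
    (hrow : mu.part r = lam.part r + ℓ)
    (hnotJM : ¬ IsJM ℓ lam) : ¬ IsJM ℓ mu := by
  set p := lam.part r with hp
  have hple : ∀ i, lam.part i ≤ mu.part i := by
    intro i
    rcases eq_or_ne i r with rfl | h
    · omega
    · rw [hpart i h]
  have F3 : ∀ a, 1 ≤ a → a < r → p + ℓ ≤ lam.part a := by
    intro a h1 h2
    rw [hpart a (by omega)]
    calc p + ℓ = mu.part r := hrow.symm
    _ ≤ mu.part a := mu.antitone a r h1 (by omega)
  have hlamr : ∀ x, r ≤ x → lam.part x ≤ p := fun x hx => lam.antitone r x hr hx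
  have hcol_mid_lam : ∀ b, p < b → b ≤ p + ℓ → lam.colLen b = r - 1 := by
    intro b hb1 hb2
    apply aux_colLen_eq_of
    · intro x hx1 hxk
      exact le_trans hb2 (F3 x hx1 (by omega))
    · intro x hxk
      exact lt_of_le_of_lt (hlamr x (by omega)) hb1
  have hcol_mid_mu : ∀ b, p < b → b ≤ p + ℓ → mu.colLen b = r := by
    intro b hb1 hb2
    apply aux_colLen_eq_of
    · intro x hx1 hxk
      calc b ≤ p + ℓ := hb2
      _ = mu.part r := hrow.symm
      _ ≤ mu.part x := mu.antitone x r hx1 hxk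
    · intro x hxk
      have h1 : lam.part x ≤ p := hlamr x (by omega)
      rw [← hpart x (by omega)]
      omega
  have hcol_out : ∀ b, b ≤ p ∨ p + ℓ < b → lam.colLen b = mu.colLen b := by
    intro b hb
    rw [aux_colLen_eq_ncard, aux_colLen_eq_ncard]
    congr 1
    ext x
    simp only [Set.mem_setOf_eq]
    constructor
    · rintro ⟨h1, h2⟩
      exact ⟨h1, le_trans h2 (hple x)⟩
    · rintro ⟨h1, h2⟩
      refine ⟨h1, ?_⟩
      rcases eq_or_ne x r with heqr | hx
      · rw [heqr]
        rw [heqr] at h2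
        omega
      · rw [hpart x hx]; exact h2
  have H1 : ∀ a b, (a, b) ∈ lam.cells → (b ≤ p ∨ p + ℓ < b) →
      (ℓ ∣ mu.hook a b ↔ ℓ ∣ lam.hook a b) := by
    intro a b hcell hb
    have ha1 : 1 ≤ a := hcell.1
    have hb1 : 1 ≤ b := hcell.2.1
    have hab : b ≤ lam.part a := hcell.2.2
    have hcol := hcol_out b hb
    rcases eq_or_ne a r with heqr | hne
    · have hab' : b ≤ p := by rw [hp, ← heqr]; exact hab
      have hbp : b ≤ p := by
        rcases hb with h | h
        · exact h
        · exfalso; omega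
      have heq : mu.hook a b = lam.hook a b + ℓ := by
        show (mu.part a - b) + (mu.colLen b - a) + 1 = (lam.part a - b) + (lam.colLen b - a) + 1 + ℓ
        rw [heqr, ← hcol, hrow]
        omega
      rw [heq, add_comm]
      exact Nat.dvd_add_right (dvd_refl ℓ)
    · have heq : mu.hook a b = lam.hook a b := by
        show (mu.part a - b) + (mu.colLen b - a) + 1 = (lam.part a - b) + (lam.colLen b - a) + 1
        rw [← hcol, hpart a hne]
      rw [heq]
  have H2 : ∀ a b, 1 ≤ a → a < r → p < b → b ≤ p + ℓ → mu.hook a b = lam.hook a b + 1 := by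
    intro a b ha har hb1 hb2
    show (mu.part a - b) + (mu.colLen b - a) + 1 = (lam.part a - b) + (lam.colLen b - a) + 1 + 1
    rw [← hpart a (by omega), hcol_mid_lam b hb1 hb2, hcol_mid_mu b hb1 hb2]
    omega
  have H3 : ∀ a b b', 1 ≤ a → a < r → p < b → b ≤ b' → b' ≤ p + ℓ →
      lam.hook a b = lam.hook a b' + (b' - b) := by
    intro a b b' ha har hb hbb hb'
    show (lam.part a - b) + (lam.colLen b - a) + 1 = (lam.part a - b') + (lam.colLen b' - a) + 1 + (b' - b)
    rw [hcol_mid_lam b (by omega) (by omega), hcol_mid_lam b' (by omega) hb']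
    have := F3 a ha har
    omega
  have H4 : ∀ b, p < b → b ≤ p + ℓ → mu.hook r b = p + ℓ + 1 - b := by
    intro b hb1 hb2
    show (mu.part r - b) + (mu.colLen b - r) + 1 = p + ℓ + 1 - b
    rw [hrow, hcol_mid_mu b hb1 hb2]
    omega
  have hdvd_succ : ∀ h : ℕ, ℓ ∣ h → ¬ ℓ ∣ h + 1 := by
    intro h hd hd'
    have h1 : ℓ ∣ h + 1 - h := Nat.dvd_sub hd' hd
    have h2 : h + 1 - h = 1 := by omega
    rw [h2] at h1
    have := Nat.le_of_dvd one_pos h1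
    omega
  simp only [IsJM, not_not] at hnotJM ⊢
  obtain ⟨a, b, y, x, hab, hay, hxb, hdvd, hndy, hndx⟩ := hnotJM
  have ha1 : 1 ≤ a := hab.1
  have hb1 : 1 ≤ b := hab.2.1
  have habp : b ≤ lam.part a := hab.2.2
  have hy1 : 1 ≤ y := hay.2.1
  have hayp : y ≤ lam.part a := hay.2.2
  have hx1 : 1 ≤ x := hxb.1
  have hxbp : b ≤ lam.part x := hxb.2.2
  have hsub : lam.cells ⊆ mu.cells := by
    rintro ⟨u, v⟩ ⟨h1, h2, h3⟩
    exact ⟨h1, h2, le_trans h3 (hple u)⟩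
  have keyrow : ∀ a' b' : ℕ, (a', b') ∈ lam.cells → p < b' → a' < r := by
    intro a' b' hm hpb
    have h3 : b' ≤ lam.part a' := hm.2.2
    by_contra h
    have := hlamr a' (by omega)
    omega
  by_cases hbC : p < b ∧ b ≤ p + ℓ
  · obtain ⟨hbp, hbpl⟩ := hbC
    have har : a < r := keyrow a b hab hbp
    have hxr : x < r := keyrow x b hxb hbp
    by_cases hblt : b < p + ℓ
    · -- divisible box (a, b+1), row witness (a,b), col witness (r, b+1)
      refine ⟨a, b + 1, b, r, ?_, hsub hab, ?_, ?_, ?_, ?_⟩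
      · exact hsub (aux_mem_cells.mpr ⟨ha1, by omega, by have := F3 a ha1 har; omega⟩)
      · exact aux_mem_cells.mpr ⟨hr, by omega, by omega⟩
      · rw [H2 a (b + 1) ha1 har (by omega) (by omega)]
        have h3 := H3 a b (b + 1) ha1 har hbp (by omega) (by omega)
        have heq : lam.hook a (b + 1) + 1 = lam.hook a b := by omega
        rw [heq]; exact hdvd
      · rw [H2 a b ha1 har hbp hbpl]
        exact hdvd_succ _ hdvd
      · rw [H4 (b + 1) (by omega) (by omega)]
        intro hd
        have h0 : 0 < p + ℓ + 1 - (b + 1) := by omega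
        have := Nat.le_of_dvd h0 hd
        omega
    · -- b = p + ℓ : divisible box (a, p+1), row witness (a,b), col witness (x, p+1)
      refine ⟨a, p + 1, b, x, ?_, hsub hab, ?_, ?_, ?_, ?_⟩
      · exact hsub (aux_mem_cells.mpr ⟨ha1, by omega, by have := F3 a ha1 har; omega⟩)
      · exact hsub (aux_mem_cells.mpr ⟨hx1, by omega, by have := F3 x hx1 hxr; omega⟩)
      · rw [H2 a (p + 1) ha1 har (by omega) (by omega)]
        have h3 := H3 a (p + 1) b ha1 har (by omega) (by omega) (by omega)
        have heq : lam.hook a (p + 1) + 1 = lam.hook a b + ℓ := by omega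
        rw [heq]
        exact Nat.dvd_add hdvd dvd_rfl
      · rw [H2 a b ha1 har hbp (by omega)]
        exact hdvd_succ _ hdvd
      · rw [H2 x (p + 1) hx1 hxr (by omega) (by omega)]
        have h3 := H3 x (p + 1) b hx1 hxr (by omega) (by omega) (by omega)
        have heq : lam.hook x (p + 1) + 1 = lam.hook x b + ℓ := by omega
        rw [heq, add_comm]
        intro hd
        exact hndx ((Nat.dvd_add_right (dvd_refl ℓ)).mp hd)
  · have hbout : b ≤ p ∨ p + ℓ < b := by omega
    have hdvd' : ℓ ∣ mu.hook a b := (H1 a b hab hbout).mpr hdvd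
    have hndx' : ¬ ℓ ∣ mu.hook x b := fun h => hndx ((H1 x b hxb hbout).mp h)
    by_cases hyC : p < y ∧ y ≤ p + ℓ
    · obtain ⟨hyp, hypl⟩ := hyC
      have har : a < r := keyrow a y hay hyp
      by_cases hy1dvd : ℓ ∣ lam.hook a y + 1
      · by_cases hylt : y < p + ℓ
        · refine ⟨a, b, y + 1, x, hsub hab, ?_, hsub hxb, hdvd', ?_, hndx'⟩
          · exact hsub (aux_mem_cells.mpr ⟨ha1, by omega, by have := F3 a ha1 har; omega⟩)
          · rw [H2 a (y + 1) ha1 har (by omega) (by omega)]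
            have h3 := H3 a y (y + 1) ha1 har hyp (by omega) (by omega)
            have heq : lam.hook a (y + 1) + 1 = lam.hook a y := by omega
            rw [heq]; exact hndy
        · refine ⟨a, b, y - 1, x, hsub hab, ?_, hsub hxb, hdvd', ?_, hndx'⟩
          · exact hsub (aux_mem_cells.mpr ⟨ha1, by omega, by have := F3 a ha1 har; omega⟩)
          · rw [H2 a (y - 1) ha1 har (by omega) (by omega)]
            have h3 := H3 a (y - 1) y ha1 har (by omega) (by omega) (by omega)
            have heq : lam.hook a (y - 1) + 1 = (lam.hook a y + 1) + 1 := by omega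
            rw [heq]
            exact hdvd_succ _ hy1dvd
      · refine ⟨a, b, y, x, hsub hab, hsub hay, hsub hxb, hdvd', ?_, hndx'⟩
        rw [H2 a y ha1 har hyp hypl]
        exact hy1dvd
    · have hyout : y ≤ p ∨ p + ℓ < y := by omega
      exact ⟨a, b, y, x, hsub hab, hsub hay, hsub hxb, hdvd',
        fun h => hndy ((H1 a y hay hyout).mp h), hndx'⟩

end Aux

/-- If `λ` is not an `(ℓ,0)`-JM partition and `μ` is obtained from `λ` by
adding a horizontal or vertical `ℓ`-rim hook (i.e. `λ = μ \ S` for a horizontal or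
vertical removable `ℓ`-rim hook `S` of `μ`), then `μ` is not an `(ℓ,0)`-JM partition. -/
theorem statement0 (ℓ : ℕ) (hℓ : 2 < ℓ) (lam mu : YPartition) (S : Set (ℕ × ℕ))
    (hnotJM : ¬ IsJM ℓ lam)
    (hhook : IsRimHook ℓ mu S)
    (hhv : HorizontalHook S ∨ VerticalHook S)
    (hdiff : lam.cells = mu.cells \ S) :
    ¬ IsJM ℓ mu := by
  obtain ⟨hSsub, hScard, hconn, hsq, hν⟩ := hhook
  have hsub : lam.cells ⊆ mu.cells := by rw [hdiff]; exact Set.diff_subset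
  have hSne : S.Nonempty := by
    rcases Set.eq_empty_or_nonempty S with h | h
    · rw [h, Set.ncard_empty] at hScard; omega
    · exact h
  have hScompl : mu.cells \ lam.cells = S := by
    rw [hdiff, Set.diff_diff_cancel_left hSsub]
  have hmemS : ∀ q : ℕ × ℕ, q ∈ mu.cells → q ∉ lam.cells → q ∈ S := by
    intro q h1 h2
    rw [← hScompl]
    exact ⟨h1, h2⟩
  have hnotlam : ∀ q : ℕ × ℕ, q ∈ S → q ∉ lam.cells := by
    intro q hq hl
    rw [hdiff] at hl
    exact hl.2 hq
  rcases hhv with ⟨r, hrow⟩ | ⟨c, hcolm⟩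
  · -- horizontal case
    obtain ⟨q0, hq0⟩ := hSne
    have hr1 : 1 ≤ r := by
      have h1 := (hSsub hq0).1
      rw [hrow q0 hq0] at h1
      exact h1
    have hpart : ∀ i, i ≠ r → lam.part i = mu.part i := by
      intro i hi
      refine le_antisymm (aux_part_le_of_subset hsub i) ?_
      rcases Nat.eq_zero_or_pos i with rfl | hi1
      · rw [mu.zero_at_zero]; exact Nat.zero_le _
      rcases Nat.eq_zero_or_pos (mu.part i) with h0 | hmp
      · omega
      have hm : (i, mu.part i) ∈ mu.cells := ⟨hi1, hmp, le_refl _⟩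
      have hns : (i, mu.part i) ∉ S := fun hmem => hi (hrow _ hmem)
      have hl : (i, mu.part i) ∈ lam.cells := by rw [hdiff]; exact ⟨hm, hns⟩
      exact hl.2.2
    have hSchar : ∀ a' b' : ℕ, (a', b') ∈ S ↔
        a' = r ∧ lam.part r < b' ∧ b' ≤ mu.part r := by
      intro a' b'
      constructor
      · intro hmem
        have hm := hSsub hmem
        have ha' : a' = r := hrow _ hmem
        subst ha'
        refine ⟨rfl, ?_, hm.2.2⟩
        by_contra h
        push_neg at h
        exact hnotlam _ hmem ⟨hm.1, hm.2.1, h⟩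
      · rintro ⟨rfl, h2, h3⟩
        have hb1 : 1 ≤ b' := by omega
        have hm : (a', b') ∈ mu.cells := ⟨hr1, hb1, h3⟩
        refine hmemS _ hm ?_
        intro hl
        have hle := (aux_mem_cells.mp hl).2.2
        omega
    have himg : S = (fun t => ((r : ℕ), t)) '' Set.Ioc (lam.part r) (mu.part r) := by
      ext ⟨a', b'⟩
      rw [hSchar]
      simp only [Set.mem_image, Set.mem_Ioc, Prod.mk.injEq]
      constructor
      · rintro ⟨rfl, h2, h3⟩
        exact ⟨b', ⟨h2, h3⟩, rfl, rfl⟩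
      · rintro ⟨t, ⟨h2, h3⟩, rfl, rfl⟩
        exact ⟨rfl, h2, h3⟩
    have hcard2 : S.ncard = mu.part r - lam.part r := by
      rw [himg, Set.ncard_image_of_injective _ (fun t1 t2 h => by simpa using h),
        aux_ncard_Ioc]
    have hrow' : mu.part r = lam.part r + ℓ := by omega
    exact aux_horiz ℓ hℓ lam mu r hr1 hpart hrow' hnotJM
  · -- vertical case: pass to conjugates
    obtain ⟨q0, hq0⟩ := hSne
    have hc1 : 1 ≤ c := by
      have h1 := (hSsub hq0).2.1
      rw [hcolm q0 hq0] at h1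
      exact h1
    have hpartT : ∀ i, i ≠ c → (aux_conj lam).part i = (aux_conj mu).part i := by
      intro i hi
      rcases Nat.eq_zero_or_pos i with rfl | hi1
      · rw [(aux_conj lam).zero_at_zero, (aux_conj mu).zero_at_zero]
      show lam.colLen i = mu.colLen i
      rw [aux_colLen_eq_ncard, aux_colLen_eq_ncard]
      congr 1
      ext x
      simp only [Set.mem_setOf_eq]
      constructor
      · rintro ⟨h1, h2⟩
        exact ⟨h1, le_trans h2 (aux_part_le_of_subset hsub x)⟩
      · rintro ⟨h1, h2⟩
        refine ⟨h1, ?_⟩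
        have hm : (x, i) ∈ mu.cells := ⟨h1, hi1, h2⟩
        have hns : (x, i) ∉ S := fun hmem => hi (hcolm _ hmem)
        have hl : (x, i) ∈ lam.cells := by rw [hdiff]; exact ⟨hm, hns⟩
        exact hl.2.2
    have hSchar : ∀ a' b' : ℕ, (a', b') ∈ S ↔
        b' = c ∧ lam.colLen c < a' ∧ a' ≤ mu.colLen c := by
      intro a' b'
      constructor
      · intro hmem
        have hm := hSsub hmem
        have hb' : b' = c := hcolm _ hmem
        subst hb'
        obtain ⟨h1, h2, h3⟩ := hm
        refine ⟨rfl, ?_, (aux_le_colLen_iff mu h1 h2).mpr h3⟩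
        by_contra h
        push_neg at h
        have := (aux_le_colLen_iff lam h1 h2).mp h
        exact hnotlam _ hmem ⟨h1, h2, this⟩
      · rintro ⟨rfl, h2, h3⟩
        have ha1 : 1 ≤ a' := by omega
        have hm : (a', b') ∈ mu.cells := ⟨ha1, hc1, (aux_le_colLen_iff mu ha1 hc1).mp h3⟩
        refine hmemS _ hm ?_
        intro hl
        have hle := (aux_mem_cells.mp hl).2.2
        have := (aux_le_colLen_iff lam ha1 hc1).mpr hle
        omega
    have himg : S = (fun t => (t, (c : ℕ))) '' Set.Ioc (lam.colLen c) (mu.colLen c) := by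
      ext ⟨a', b'⟩
      rw [hSchar]
      simp only [Set.mem_image, Set.mem_Ioc, Prod.mk.injEq]
      constructor
      · rintro ⟨rfl, h2, h3⟩
        exact ⟨a', ⟨h2, h3⟩, rfl, rfl⟩
      · rintro ⟨t, ⟨h2, h3⟩, rfl, rfl⟩
        exact ⟨rfl, h2, h3⟩
    have hcard2 : S.ncard = mu.colLen c - lam.colLen c := by
      rw [himg, Set.ncard_image_of_injective _ (fun t1 t2 h => by simpa using h),
        aux_ncard_Ioc]
    have hcolT : (aux_conj mu).part c = (aux_conj lam).part c + ℓ := by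
      show mu.colLen c = lam.colLen c + ℓ
      omega
    have hT := aux_horiz ℓ hℓ (aux_conj lam) (aux_conj mu) c hc1 hpartT hcolT
      (aux_notJM_conj hnotJM)
    exact aux_notJM_of_conj hT
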